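/- Let L > 0, ν ≥ 0, r ∈ ℝ³ with ‖r‖₂ = 1, and let k > 2νL². Let m : [0,∞) × [0,L] → ℝ³ be twice continuously differentiable in (t,x), satisfy ∂m/∂t = m × m_xx − ν m × (m × m_xx) + k(r − m) on [0,∞) × [0,L] with Neumann boundary conditions m_x(t,0) = m_x(t,L) = 0. Then ∫₀ᴸ ‖m(t,x) − r‖₂² dx → 0 as t → ∞, i.e. m(·,t) converges to the target equilibrium r in the L²-norm. (The attractivity assertion of the paper's Theorem 3.7: r is a globally asymptotically stable equilibrium of the controlled Landau–Lifshitz equation in the L²-norm; the paper states the threshold as k > 8νL⁴.) -/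

import Mathlib

open Filter

/-- Cross product on `ℝ³ = EuclideanSpace ℝ (Fin 3)`. -/
noncomputable def cross3 (u v : EuclideanSpace ℝ (Fin 3)) : EuclideanSpace ℝ (Fin 3) :=
  (WithLp.equiv 2 (Fin 3 → ℝ)).symm
    ![u 1 * v 2 - u 2 * v 1, u 2 * v 0 - u 0 * v 2, u 0 * v 1 - u 1 * v 0]

/-- Second spatial derivative `m_xx` of `m(t, x)`. -/
noncomputable def mxx (m : ℝ → ℝ → EuclideanSpace ℝ (Fin 3)) (t x : ℝ) :
    EuclideanSpace ℝ (Fin 3) :=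
  deriv (deriv (m t)) x

local notation "E3" => EuclideanSpace ℝ (Fin 3)
local notation "⟪" x ", " y "⟫" => inner (𝕜 := ℝ) x y

section prelims

lemma cross3_apply (u v : E3) (i : Fin 3) :
    cross3 u v i = ![u 1 * v 2 - u 2 * v 1, u 2 * v 0 - u 0 * v 2, u 0 * v 1 - u 1 * v 0] i := rfl

lemma inner3 (u v : E3) : ⟪u, v⟫ = u 0 * v 0 + u 1 * v 1 + u 2 * v 2 := by
  simp [PiLp.inner_apply, RCLike.inner_apply, Fin.sum_univ_three, conj_trivial]; ring

lemma cross3_self (a : E3) : cross3 a a = 0 := by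
  ext i; fin_cases i <;> simp [cross3_apply] <;> ring

lemma cross3_zero_right (a : E3) : cross3 a 0 = 0 := by
  ext i; fin_cases i <;> simp [cross3_apply]

lemma inner_cross3_left (a b : E3) : ⟪cross3 a b, a⟫ = 0 := by
  simp [inner3, cross3_apply, Fin.sum_univ_three]; ring

lemma inner_cross3_right (a b : E3) : ⟪cross3 a b, b⟫ = 0 := by
  simp [inner3, cross3_apply, Fin.sum_univ_three]; ring

lemma inner_cross3_triple (a b c : E3) :
    ⟪cross3 a (cross3 a b), c⟫ = ⟪a, b⟫ * ⟪a, c⟫ - ⟪a, a⟫ * ⟪b, c⟫ := by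
  rw [inner3, inner3, inner3, inner3, inner3]; simp [cross3_apply]; ring

noncomputable def crossCLM : E3 →L[ℝ] E3 →L[ℝ] E3 :=
  LinearMap.toContinuousLinearMap
  { toFun := fun u => LinearMap.toContinuousLinearMap
      { toFun := fun v => cross3 u v
        map_add' := by
          intro a b; ext i; fin_cases i <;>
            simp [cross3_apply, PiLp.add_apply] <;> ring
        map_smul' := by
          intro c a; ext i; fin_cases i <;>
            simp [cross3_apply, PiLp.smul_apply, smul_eq_mul] <;> ring }
    map_add' := by
      intro a b; apply ContinuousLinearMap.ext; intro v; ext i; fin_cases i <;>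
        simp [cross3_apply, PiLp.add_apply] <;> ring
    map_smul' := by
      intro c a; apply ContinuousLinearMap.ext; intro v; ext i; fin_cases i <;>
        simp [cross3_apply, PiLp.smul_apply, smul_eq_mul] <;> ring }

lemma crossCLM_apply (u v : E3) : crossCLM u v = cross3 u v := rfl

lemma continuous_cross {α : Type*} [TopologicalSpace α] {a b : α → E3}
    (ha : Continuous a) (hb : Continuous b) :
    Continuous fun p => cross3 (a p) (b p) :=
  crossCLM.isBoundedBilinearMap.continuous.comp (ha.prodMk hb)

lemma HasDerivAt.cross {u v : ℝ → E3} {u' v' : E3} {x : ℝ}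
    (hu : HasDerivAt u u' x) (hv : HasDerivAt v v' x) :
    HasDerivAt (fun y => cross3 (u y) (v y)) (cross3 u' (v x) + cross3 (u x) v') x := by
  have h := (crossCLM.isBoundedBilinearMap.hasFDerivAt (u x, v x)).comp_hasDerivAt x
    (hu.prodMk hv)
  simpa [IsBoundedBilinearMap.deriv_apply, crossCLM_apply, add_comm, Function.comp_def] using h

lemma hasDerivAt_parametric (L : ℝ) {F F' : ℝ → ℝ → ℝ}
    (hF : Continuous fun p : ℝ × ℝ => F p.1 p.2)
    (hF' : Continuous fun p : ℝ × ℝ => F' p.1 p.2)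
    (hd : ∀ t x, HasDerivAt (fun s => F s x) (F' t x) t) (t₀ : ℝ) :
    HasDerivAt (fun t => ∫ x in (0:ℝ)..L, F t x) (∫ x in (0:ℝ)..L, F' t₀ x) t₀ := by
  obtain ⟨C, hC⟩ :=
    ((isCompact_Icc (a := t₀ - 1) (b := t₀ + 1)).prod
      (isCompact_uIcc (a := (0:ℝ)) (b := L))).exists_bound_of_continuousOn hF'.continuousOn
  refine (intervalIntegral.hasDerivAt_integral_of_dominated_loc_of_deriv_le
    (F := F) (F' := F') (bound := fun _ => C) (Metric.ball_mem_nhds t₀ one_pos) ?_ ?_ ?_ ?_ ?_ ?_).2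
  · exact Eventually.of_forall fun t =>
      ((hF.comp (Continuous.prodMk_right t)).aestronglyMeasurable)
  · exact (hF.comp (Continuous.prodMk_right t₀)).intervalIntegrable _ _
  · exact (hF'.comp (Continuous.prodMk_right t₀)).aestronglyMeasurable
  · refine Eventually.of_forall fun x hx t ht => ?_
    have ht' : t ∈ Set.Icc (t₀ - 1) (t₀ + 1) := by
      have := Metric.mem_ball.1 ht
      rw [Real.dist_eq] at this
      constructor <;> [linarith [abs_le.1 this.le |>.1]; linarith [abs_le.1 this.le |>.2]]
    exact hC (t, x) ⟨ht', Set.uIoc_subset_uIcc hx⟩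
  · exact intervalIntegrable_const
  · exact Eventually.of_forall fun x _ t _ => hd t x

end prelims

set_option maxHeartbeats 2000000 in
/-- attractivity in Theorem 3.7: For `k > 2νL²`, along C² solutions of
the controlled Landau–Lifshitz equation
`∂m/∂t = m × m_xx − ν m × (m × m_xx) + k(r − m)` with Neumann boundary conditions on
`[0, L]` and `‖r‖ = 1`, the solution converges to `r` in the L²-norm:
`∫₀ᴸ ‖m(t,x) − r‖² dx → 0` as `t → ∞`. -/
theorem controlled_landau_lifshitz_L2_attractivity
    (L ν k : ℝ) (hL : 0 < L) (hν : 0 ≤ ν)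
    (r : EuclideanSpace ℝ (Fin 3)) (hr : ‖r‖ = 1)
    (hk : 2 * ν * L ^ 2 < k)
    (m : ℝ → ℝ → EuclideanSpace ℝ (Fin 3))
    (hsmooth : ContDiff ℝ 2 (fun p : ℝ × ℝ => m p.1 p.2))
    (hpde : ∀ t x : ℝ, 0 ≤ t → x ∈ Set.Icc (0 : ℝ) L →
      deriv (fun s => m s x) t
        = cross3 (m t x) (mxx m t x)
          - ν • cross3 (m t x) (cross3 (m t x) (mxx m t x))
          + k • (r - m t x))
    (hbc : ∀ t : ℝ, 0 ≤ t → deriv (m t) 0 = 0 ∧ deriv (m t) L = 0) :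
    Tendsto (fun t : ℝ => ∫ x in (0 : ℝ)..L, ‖m t x - r‖ ^ 2) atTop (nhds 0) := by
  have hk0 : 0 < k := lt_of_le_of_lt (by positivity) hk
  set f : ℝ × ℝ → E3 := fun p => m p.1 p.2 with hf_def
  have hfd : Differentiable ℝ f := hsmooth.differentiable (by norm_num)
  have hfC1' : ContDiff ℝ 1 (fderiv ℝ f) := hsmooth.fderiv_right (by norm_num)
  -- first partials
  set mt : ℝ → ℝ → E3 := fun t x => fderiv ℝ f (t, x) (1, 0) with hmt_def
  set mX : ℝ → ℝ → E3 := fun t x => fderiv ℝ f (t, x) (0, 1) with hmX_def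
  have hmtC1 : ContDiff ℝ 1 (fun p : ℝ × ℝ => mt p.1 p.2) :=
    (ContinuousLinearMap.apply ℝ E3 ((1:ℝ), (0:ℝ))).contDiff.comp hfC1'
  have hmXC1 : ContDiff ℝ 1 (fun p : ℝ × ℝ => mX p.1 p.2) :=
    (ContinuousLinearMap.apply ℝ E3 ((0:ℝ), (1:ℝ))).contDiff.comp hfC1'
  -- second partials
  set q : ℝ → ℝ → E3 := fun t x => fderiv ℝ (fun p : ℝ × ℝ => mX p.1 p.2) (t, x) (0, 1) with hq_def
  set gt : ℝ → ℝ → E3 := fun t x => fderiv ℝ (fun p : ℝ × ℝ => mX p.1 p.2) (t, x) (1, 0) with hgt_def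
  set hx : ℝ → ℝ → E3 := fun t x => fderiv ℝ (fun p : ℝ × ℝ => mt p.1 p.2) (t, x) (0, 1) with hhx_def
  -- derivative facts
  have hm_t : ∀ t x, HasDerivAt (fun s => m s x) (mt t x) t := by
    intro t x
    exact (hfd (t, x)).hasFDerivAt.comp_hasDerivAt t
      ((hasDerivAt_id t).prodMk (hasDerivAt_const t x))
  have hm_x : ∀ t x, HasDerivAt (m t) (mX t x) x := by
    intro t x
    exact (hfd (t, x)).hasFDerivAt.comp_hasDerivAt x
      ((hasDerivAt_const x t).prodMk (hasDerivAt_id x))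
  have hmX_x : ∀ t x, HasDerivAt (fun y => mX t y) (q t x) x := by
    intro t x
    exact ((hmXC1.differentiable one_ne_zero) (t, x)).hasFDerivAt.comp_hasDerivAt x
      ((hasDerivAt_const x t).prodMk (hasDerivAt_id x))
  have hmX_t : ∀ t x, HasDerivAt (fun s => mX s x) (gt t x) t := by
    intro t x
    exact ((hmXC1.differentiable one_ne_zero) (t, x)).hasFDerivAt.comp_hasDerivAt t
      ((hasDerivAt_id t).prodMk (hasDerivAt_const t x))
  have hmt_x : ∀ t x, HasDerivAt (fun y => mt t y) (hx t x) x := by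
    intro t x
    exact ((hmtC1.differentiable one_ne_zero) (t, x)).hasFDerivAt.comp_hasDerivAt x
      ((hasDerivAt_const x t).prodMk (hasDerivAt_id x))
  -- identification of mxx
  have hderiv_m : ∀ t, deriv (m t) = fun x => mX t x := fun t => funext fun x => (hm_x t x).deriv
  have hmxx : ∀ t x, mxx m t x = q t x := by
    intro t x
    rw [mxx, hderiv_m t]
    exact (hmX_x t x).deriv
  -- Clairaut
  have hclairaut : ∀ t x, gt t x = hx t x := by
    intro t x
    have hF2 : HasFDerivAt (fderiv ℝ f) (fderiv ℝ (fderiv ℝ f) (t, x)) (t, x) :=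
      ((hfC1'.differentiable one_ne_zero) (t, x)).hasFDerivAt
    have hsymm := second_derivative_symmetric (fun y => (hfd y).hasFDerivAt) hF2
    have e1 : HasFDerivAt (fun p : ℝ × ℝ => mX p.1 p.2)
        ((ContinuousLinearMap.apply ℝ E3 ((0:ℝ), (1:ℝ))).comp (fderiv ℝ (fderiv ℝ f) (t, x)))
        (t, x) :=
      (ContinuousLinearMap.apply ℝ E3 ((0:ℝ), (1:ℝ))).hasFDerivAt.comp (t, x) hF2
    have e2 : HasFDerivAt (fun p : ℝ × ℝ => mt p.1 p.2)
        ((ContinuousLinearMap.apply ℝ E3 ((1:ℝ), (0:ℝ))).comp (fderiv ℝ (fderiv ℝ f) (t, x)))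
        (t, x) :=
      (ContinuousLinearMap.apply ℝ E3 ((1:ℝ), (0:ℝ))).hasFDerivAt.comp (t, x) hF2
    have g1 : gt t x = fderiv ℝ (fderiv ℝ f) (t, x) ((1:ℝ), (0:ℝ)) ((0:ℝ), (1:ℝ)) := by
      rw [hgt_def]; simp only; rw [e1.fderiv]; rfl
    have g2 : hx t x = fderiv ℝ (fderiv ℝ f) (t, x) ((0:ℝ), (1:ℝ)) ((1:ℝ), (0:ℝ)) := by
      rw [hhx_def]; simp only; rw [e2.fderiv]; rfl
    rw [g1, g2, hsymm]
  -- continuity facts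
  have hm_cont : Continuous f := hsmooth.continuous
  have hmt_cont : Continuous (fun p : ℝ × ℝ => mt p.1 p.2) := hmtC1.continuous
  have hmX_cont : Continuous (fun p : ℝ × ℝ => mX p.1 p.2) := hmXC1.continuous
  have hq_cont : Continuous (fun p : ℝ × ℝ => q p.1 p.2) :=
    (hmXC1.continuous_fderiv one_ne_zero).clm_apply continuous_const
  have hgt_cont : Continuous (fun p : ℝ × ℝ => gt p.1 p.2) :=
    (hmXC1.continuous_fderiv one_ne_zero).clm_apply continuous_const
  have hhx_cont : Continuous (fun p : ℝ × ℝ => hx p.1 p.2) :=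
    (hmtC1.continuous_fderiv one_ne_zero).clm_apply continuous_const
  -- PDE in terms of partial derivatives
  have hPDE : ∀ t, 0 ≤ t → ∀ x ∈ Set.Icc (0:ℝ) L,
      mt t x = cross3 (m t x) (q t x)
        - ν • cross3 (m t x) (cross3 (m t x) (q t x)) + k • (r - m t x) := by
    intro t ht x hxm
    have e := hpde t x ht hxm
    rwa [(hm_t t x).deriv, hmxx t x] at e
  -- boundary conditions
  have hbc' : ∀ t, 0 ≤ t → mX t 0 = 0 ∧ mX t L = 0 := by
    intro t ht
    have h1 := (hbc t ht).1
    have h2 := (hbc t ht).2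
    rw [hderiv_m t] at h1 h2
    exact ⟨h1, h2⟩
  -- inner product with constant helper
  have hinr : ∀ {u : ℝ → E3} {u' : E3} {x : ℝ} (c : E3), HasDerivAt u u' x →
      HasDerivAt (fun y => ⟪u y, c⟫) ⟪u', c⟫ x := by
    intro u u' x c hu
    simpa using hu.inner ℝ (hasDerivAt_const x c)
  -- the Lyapunov functions
  set V : ℝ → ℝ := fun t => ∫ x in (0:ℝ)..L, ‖m t x - r‖ ^ 2 with hV_def
  set Vd : ℝ → ℝ := fun t => ∫ x in (0:ℝ)..L, 2 * ⟪mt t x, m t x - r⟫ with hVd_def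
  set Ee : ℝ → ℝ := fun t => ∫ x in (0:ℝ)..L, ‖mX t x‖ ^ 2 with hEe_def
  set Ed : ℝ → ℝ := fun t => ∫ x in (0:ℝ)..L, 2 * ⟪gt t x, mX t x⟫ with hEd_def
  have hVderiv : ∀ t, HasDerivAt V (Vd t) t := by
    intro t
    apply hasDerivAt_parametric L ?_ ?_ ?_ t
    · exact ((hm_cont.sub continuous_const).norm.pow 2)
    · exact continuous_const.mul (hmt_cont.inner (hm_cont.sub continuous_const))
    · intro s x
      have h1 : HasDerivAt (fun s => m s x - r) (mt s x) s := (hm_t s x).sub_const r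
      have h2 := h1.inner ℝ h1
      have h3 : (⟪m s x - r, mt s x⟫ + ⟪mt s x, m s x - r⟫) = 2 * ⟪mt s x, m s x - r⟫ := by
        rw [real_inner_comm]; ring
      rw [h3] at h2
      simp only [real_inner_self_eq_norm_sq] at h2
      exact h2
  have hEderiv : ∀ t, HasDerivAt Ee (Ed t) t := by
    intro t
    apply hasDerivAt_parametric L ?_ ?_ ?_ t
    · exact (hmX_cont.norm.pow 2)
    · exact continuous_const.mul (hgt_cont.inner hmX_cont)
    · intro s x
      have h2 := (hmX_t s x).inner ℝ (hmX_t s x)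
      have h3 : (⟪mX s x, gt s x⟫ + ⟪gt s x, mX s x⟫) = 2 * ⟪gt s x, mX s x⟫ := by
        rw [real_inner_comm]; ring
      rw [h3] at h2
      simp only [real_inner_self_eq_norm_sq] at h2
      exact h2
  -- uniform bound on ‖m t x‖
  obtain ⟨C0, hC0⟩ := (isCompact_Icc (a := (0:ℝ)) (b := L)).exists_bound_of_continuousOn
    (((hm_cont.comp (Continuous.prodMk_right 0)).norm.pow 2).continuousOn)
  set Mb : ℝ := (1 + max 1 C0) / 2 with hMb_def
  have hMb1 : (1:ℝ) ≤ Mb := by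
    have := le_max_left (1:ℝ) C0
    rw [hMb_def]; linarith
  have hMb0 : (0:ℝ) ≤ Mb := by linarith
  have hbound_m : ∀ t, 0 ≤ t → ∀ x ∈ Set.Icc (0:ℝ) L, ‖m t x‖ ≤ Mb := by
    intro t ht x hxm
    set w : ℝ → ℝ := fun s => (‖m s x‖ ^ 2 - 1) * Real.exp (k * s) with hw_def
    have hn : ∀ s, HasDerivAt (fun s => ‖m s x‖ ^ 2 - 1) (2 * ⟪mt s x, m s x⟫) s := by
      intro s
      have h2 := (hm_t s x).inner ℝ (hm_t s x)
      have h3 : (⟪m s x, mt s x⟫ + ⟪mt s x, m s x⟫) = 2 * ⟪mt s x, m s x⟫ := by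
        rw [real_inner_comm]; ring
      rw [h3] at h2
      simp only [real_inner_self_eq_norm_sq] at h2
      exact h2.sub_const 1
    have he : ∀ s : ℝ, HasDerivAt (fun s => Real.exp (k * s)) (Real.exp (k * s) * k) s := by
      intro s
      simpa using ((hasDerivAt_id s).const_mul k).exp
    have hw : ∀ s, HasDerivAt w
        (2 * ⟪mt s x, m s x⟫ * Real.exp (k * s)
          + (‖m s x‖ ^ 2 - 1) * (Real.exp (k * s) * k)) s :=
      fun s => (hn s).mul (he s)
    have hanti : AntitoneOn w (Set.Ici 0) := by
      apply antitoneOn_of_deriv_nonpos (convex_Ici 0)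
      · exact (fun s _ => ((hw s).differentiableAt).continuousAt.continuousWithinAt)
      · intro s hs
        exact ((hw s).differentiableAt).differentiableWithinAt
      · intro s hs
        rw [interior_Ici] at hs
        rw [(hw s).deriv]
        have hPDEs := hPDE s (le_of_lt hs) x hxm
        have hinner : ⟪mt s x, m s x⟫ = k * (⟪r, m s x⟫ - ⟪m s x, m s x⟫) := by
          rw [hPDEs]
          simp only [inner_add_left, inner_sub_left, real_inner_smul_left,
            inner_cross3_left, inner_cross3_triple]
          ring
        have hCS : 2 * ⟪r, m s x⟫ ≤ 1 + ⟪m s x, m s x⟫ := by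
          have h0 : (0:ℝ) ≤ ⟪r - m s x, r - m s x⟫ := real_inner_self_nonneg
          have hexp : ⟪r - m s x, r - m s x⟫
              = ⟪r, r⟫ - 2 * ⟪r, m s x⟫ + ⟪m s x, m s x⟫ := by
            rw [inner_sub_left, inner_sub_right, inner_sub_right,
              real_inner_comm (m s x) r]
            ring
          have hrr : ⟪r, r⟫ = 1 := by
            rw [real_inner_self_eq_norm_sq, hr]; norm_num
          rw [hexp, hrr] at h0
          linarith
        have hE : (0:ℝ) < Real.exp (k * s) := Real.exp_pos _
        have hnm : ⟪m s x, m s x⟫ = ‖m s x‖ ^ 2 := real_inner_self_eq_norm_sq _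
        rw [hinner, ← hnm]
        nlinarith [mul_nonneg (mul_nonneg hE.le hk0.le)
          (by linarith : (0:ℝ) ≤ 1 + ⟪m s x, m s x⟫ - 2 * ⟪r, m s x⟫)]
    have hwle : w t ≤ w 0 := by
      rcases eq_or_lt_of_le ht with h | h
      · rw [← h]
      · exact hanti Set.self_mem_Ici (le_of_lt h) ht
    have hw0 : w 0 = ‖m 0 x‖ ^ 2 - 1 := by simp [hw_def]
    have hC0x : ‖m 0 x‖ ^ 2 ≤ C0 := by
      have h := hC0 x hxm
      simp only [Pi.pow_apply, Function.comp_apply] at h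
      rw [Real.norm_eq_abs, abs_of_nonneg (by positivity)] at h
      exact h
    have hEt1 : (1:ℝ) ≤ Real.exp (k * t) := by
      rw [Real.one_le_exp_iff]
      positivity
    have hgle : ‖m t x‖ ^ 2 ≤ max 1 C0 := by
      rcases le_or_gt (‖m t x‖ ^ 2) 1 with h | h
      · exact le_trans h (le_max_left _ _)
      · have h1 : (‖m t x‖ ^ 2 - 1) ≤ (‖m t x‖ ^ 2 - 1) * Real.exp (k * t) :=
          le_mul_of_one_le_right (by linarith) hEt1
        have h3 : w t ≤ ‖m 0 x‖ ^ 2 - 1 := by rw [← hw0]; exact hwle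
        have h4 : w t = (‖m t x‖ ^ 2 - 1) * Real.exp (k * t) := by rw [hw_def]
        rw [h4] at h3
        have h5 := le_max_right (1:ℝ) C0
        linarith
    have h6 : 2 * ‖m t x‖ ≤ 1 + ‖m t x‖ ^ 2 := by nlinarith [sq_nonneg (‖m t x‖ - 1)]
    have h7 : ‖m t x‖ ≤ (1 + max 1 C0) / 2 := by linarith
    rw [hMb_def]
    exact h7
  have hIcc : Set.uIcc (0:ℝ) L = Set.Icc (0:ℝ) L := Set.uIcc_of_le hL.le
  -- key inequality for V
  have key_V : ∀ t, 0 ≤ t → Vd t + 2*k*V t ≤ 4*ν*Mb*Ee t := by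
    intro t ht
    have cm : Continuous (fun x : ℝ => m t x) := hm_cont.comp (Continuous.prodMk_right t)
    have cmX : Continuous (fun x : ℝ => mX t x) := hmX_cont.comp (Continuous.prodMk_right t)
    have cq : Continuous (fun x : ℝ => q t x) := hq_cont.comp (Continuous.prodMk_right t)
    set P : ℝ → ℝ := fun x => -2 * ⟪cross3 (m t x) (mX t x), r⟫
        + 2*ν*(⟪m t x, mX t x⟫ * ⟪m t x, r⟫)
        - 2*ν*(⟪m t x, m t x⟫ * ⟪mX t x, r⟫) with hPdef
    set Pd : ℝ → ℝ := fun x => -2 * ⟪cross3 (mX t x) (mX t x) + cross3 (m t x) (q t x), r⟫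
        + 2*ν*((⟪m t x, q t x⟫ + ⟪mX t x, mX t x⟫) * ⟪m t x, r⟫
            + ⟪m t x, mX t x⟫ * ⟪mX t x, r⟫)
        - 2*ν*((⟪m t x, mX t x⟫ + ⟪mX t x, m t x⟫) * ⟪mX t x, r⟫
            + ⟪m t x, m t x⟫ * ⟪q t x, r⟫) with hPddef
    set D : ℝ → ℝ := fun x => 2*ν*(⟪m t x, mX t x⟫ * ⟪mX t x, r⟫)
        - 2*ν*(⟪mX t x, mX t x⟫ * ⟪m t x, r⟫) with hDdef
    have hPder : ∀ x, HasDerivAt P (Pd x) x := by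
      intro x
      have d1 := hinr r ((hm_x t x).cross (hmX_x t x))
      have d2 := ((hm_x t x).inner ℝ (hmX_x t x)).mul (hinr r (hm_x t x))
      have d3 := ((hm_x t x).inner ℝ (hm_x t x)).mul (hinr r (hmX_x t x))
      exact ((d1.const_mul (-2)).add (d2.const_mul (2*ν))).sub (d3.const_mul (2*ν))
    have hP0 : P 0 = 0 := by
      have h0 := (hbc' t ht).1
      simp [hPdef, h0, cross3_zero_right, inner_zero_left, inner_zero_right]
    have hPL : P L = 0 := by
      have h0 := (hbc' t ht).2
      simp [hPdef, h0, cross3_zero_right, inner_zero_left, inner_zero_right]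
    have hPd_cont : Continuous Pd := by
      refine ((Continuous.mul continuous_const (Continuous.inner
        ((continuous_cross cmX cmX).add (continuous_cross cm cq)) continuous_const)).add
        (Continuous.mul continuous_const ?_)).sub (Continuous.mul continuous_const ?_)
      · exact (Continuous.mul ((cm.inner cq).add (cmX.inner cmX)) (cm.inner continuous_const)).add
          ((cm.inner cmX).mul (cmX.inner continuous_const))
      · exact (Continuous.mul ((cm.inner cmX).add (cmX.inner cm)) (cmX.inner continuous_const)).add
          ((cm.inner cm).mul (cq.inner continuous_const))
    have hD_cont : Continuous D :=
      (Continuous.mul continuous_const ((cm.inner cmX).mul (cmX.inner continuous_const))).sub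
        (Continuous.mul continuous_const ((cmX.inner cmX).mul (cm.inner continuous_const)))
    have hFTC : ∫ x in (0:ℝ)..L, Pd x = 0 := by
      rw [intervalIntegral.integral_eq_sub_of_hasDerivAt (fun x _ => hPder x)
        (hPd_cont.intervalIntegrable _ _), hPL, hP0, sub_zero]
    have hcongr : Set.EqOn (fun x => 2*⟪mt t x, m t x - r⟫)
        (fun x => Pd x + (D x - 2*k*‖m t x - r‖^2)) (Set.uIcc (0:ℝ) L) := by
      intro x hxu
      rw [hIcc] at hxu
      simp only [hPddef, hDdef]
      rw [hPDE t ht x hxu]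
      simp only [← real_inner_self_eq_norm_sq]
      simp only [inner_add_left, inner_sub_left, inner_sub_right, real_inner_smul_left,
        inner_cross3_left, inner_cross3_triple, cross3_self, inner_zero_left,
        real_inner_comm (mX t x) (m t x), real_inner_comm (q t x) (m t x),
        real_inner_comm r (m t x)]
      ring
    have hncont : Continuous (fun x : ℝ => 2*k*‖m t x - r‖^2) :=
      continuous_const.mul (((cm.sub continuous_const).norm).pow 2)
    have hVd_eq : Vd t = (∫ x in (0:ℝ)..L, Pd x)
        + ((∫ x in (0:ℝ)..L, D x) - 2*k*V t) := by
      have e1 : Vd t = ∫ x in (0:ℝ)..L, (Pd x + (D x - 2*k*‖m t x - r‖^2)) :=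
        intervalIntegral.integral_congr hcongr
      rw [e1, intervalIntegral.integral_add (hPd_cont.intervalIntegrable _ _)
        ((show Continuous (fun x => D x - 2*k*‖m t x - r‖^2) from hD_cont.sub hncont).intervalIntegrable _ _),
        intervalIntegral.integral_sub (hD_cont.intervalIntegrable _ _)
          (hncont.intervalIntegrable _ _)]
      congr 1
      rw [intervalIntegral.integral_const_mul]
    have hDle : (∫ x in (0:ℝ)..L, D x) ≤ 4*ν*Mb * Ee t := by
      have hmono : (∫ x in (0:ℝ)..L, D x) ≤ ∫ x in (0:ℝ)..L, (4*ν*Mb) * ‖mX t x‖^2 := by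
        apply intervalIntegral.integral_mono_on hL.le (hD_cont.intervalIntegrable _ _)
          ((continuous_const.mul (cmX.norm.pow 2)).intervalIntegrable _ _)
        intro x hxm
        have hm_le := hbound_m t ht x hxm
        have h1 : |⟪m t x, mX t x⟫| ≤ ‖m t x‖ * ‖mX t x‖ := abs_real_inner_le_norm _ _
        have h2 : |⟪mX t x, r⟫| ≤ ‖mX t x‖ := by
          have := abs_real_inner_le_norm (mX t x) r
          rwa [hr, mul_one] at this
        have h3 : |⟪m t x, r⟫| ≤ ‖m t x‖ := by
          have := abs_real_inner_le_norm (m t x) r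
          rwa [hr, mul_one] at this
        have h4 : ⟪mX t x, mX t x⟫ = ‖mX t x‖^2 := real_inner_self_eq_norm_sq _
        have e1 : ⟪m t x, mX t x⟫ * ⟪mX t x, r⟫ ≤ ‖m t x‖ * ‖mX t x‖ * ‖mX t x‖ := by
          calc ⟪m t x, mX t x⟫ * ⟪mX t x, r⟫ ≤ |⟪m t x, mX t x⟫ * ⟪mX t x, r⟫| :=
                le_abs_self _
            _ = |⟪m t x, mX t x⟫| * |⟪mX t x, r⟫| := abs_mul _ _
            _ ≤ (‖m t x‖ * ‖mX t x‖) * ‖mX t x‖ :=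
                mul_le_mul h1 h2 (abs_nonneg _) (by positivity)
        have e2 : -(⟪mX t x, mX t x⟫ * ⟪m t x, r⟫) ≤ ‖mX t x‖^2 * ‖m t x‖ := by
          calc -(⟪mX t x, mX t x⟫ * ⟪m t x, r⟫) ≤ |⟪mX t x, mX t x⟫ * ⟪m t x, r⟫| :=
                neg_le_abs _
            _ = |⟪mX t x, mX t x⟫| * |⟪m t x, r⟫| := abs_mul _ _
            _ ≤ ‖mX t x‖^2 * ‖m t x‖ := by
                rw [h4, abs_of_nonneg (by positivity)]
                exact mul_le_mul_of_nonneg_left h3 (by positivity)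
        have e3 : 0 ≤ ν * (‖mX t x‖^2 * (Mb - ‖m t x‖)) :=
          mul_nonneg hν (mul_nonneg (by positivity) (by linarith))
        simp only [hDdef, Pi.mul_apply, Pi.pow_apply]
        nlinarith [mul_le_mul_of_nonneg_left e1 hν, mul_le_mul_of_nonneg_left e2 hν]
      calc (∫ x in (0:ℝ)..L, D x) ≤ ∫ x in (0:ℝ)..L, (4*ν*Mb) * ‖mX t x‖^2 := hmono
        _ = 4*ν*Mb * Ee t := by rw [intervalIntegral.integral_const_mul]
    rw [hVd_eq, hFTC]
    linarith
  -- key inequality for Ee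
  have key_E : ∀ t, 0 ≤ t → Ed t ≤ -(2*k) * Ee t := by
    intro t ht
    have cm : Continuous (fun x : ℝ => m t x) := hm_cont.comp (Continuous.prodMk_right t)
    have cmX : Continuous (fun x : ℝ => mX t x) := hmX_cont.comp (Continuous.prodMk_right t)
    have cq : Continuous (fun x : ℝ => q t x) := hq_cont.comp (Continuous.prodMk_right t)
    have cmt : Continuous (fun x : ℝ => mt t x) := hmt_cont.comp (Continuous.prodMk_right t)
    have chx : Continuous (fun x : ℝ => hx t x) := hhx_cont.comp (Continuous.prodMk_right t)
    set Pe : ℝ → ℝ := fun x => 2*⟪mt t x, mX t x⟫ - 2*k*⟪r - m t x, mX t x⟫ with hPedef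
    set Ped : ℝ → ℝ := fun x => 2*(⟪mt t x, q t x⟫ + ⟪hx t x, mX t x⟫)
        - 2*k*(⟪r - m t x, q t x⟫ + ⟪0 - mX t x, mX t x⟫) with hPeddef
    set G : ℝ → ℝ := fun x => 2*ν*(⟪m t x, q t x⟫ * ⟪m t x, q t x⟫
        - ⟪m t x, m t x⟫ * ⟪q t x, q t x⟫) - 2*k*‖mX t x‖^2 with hGdef
    have hPeder : ∀ x, HasDerivAt Pe (Ped x) x := by
      intro x
      have d5 := (hmt_x t x).inner ℝ (hmX_x t x)
      have d6 := (((hasDerivAt_const x r).sub (hm_x t x)).inner ℝ (hmX_x t x))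
      exact ((d5.const_mul 2).sub (d6.const_mul (2*k)))
    have hPe0 : Pe 0 = 0 := by
      have h0 := (hbc' t ht).1
      simp [hPedef, h0, inner_zero_right]
    have hPeL : Pe L = 0 := by
      have h0 := (hbc' t ht).2
      simp [hPedef, h0, inner_zero_right]
    have hPed_cont : Continuous Ped :=
      (continuous_const.mul ((cmt.inner cq).add (chx.inner cmX))).sub
        (continuous_const.mul (((continuous_const.sub cm).inner cq).add
          (((continuous_const.sub cmX)).inner cmX)))
    have hG_cont : Continuous G :=
      (continuous_const.mul (((cm.inner cq).mul (cm.inner cq)).sub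
        ((cm.inner cm).mul (cq.inner cq)))).sub
        (continuous_const.mul (cmX.norm.pow 2))
    have hFTCe : ∫ x in (0:ℝ)..L, Ped x = 0 := by
      rw [intervalIntegral.integral_eq_sub_of_hasDerivAt (fun x _ => hPeder x)
        (hPed_cont.intervalIntegrable _ _), hPeL, hPe0, sub_zero]
    have hcongrE : Set.EqOn (fun x => 2*⟪gt t x, mX t x⟫)
        (fun x => Ped x + G x) (Set.uIcc (0:ℝ) L) := by
      intro x hxu
      rw [hIcc] at hxu
      simp only [hPeddef, hGdef]
      rw [hclairaut t x, hPDE t ht x hxu]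
      simp only [← real_inner_self_eq_norm_sq]
      simp only [inner_add_left, inner_sub_left, inner_sub_right, real_inner_smul_left,
        inner_cross3_right, inner_cross3_triple, cross3_self, inner_zero_left]
      ring
    have hEd_eq : Ed t = (∫ x in (0:ℝ)..L, Ped x) + (∫ x in (0:ℝ)..L, G x) := by
      have e1 : Ed t = ∫ x in (0:ℝ)..L, (Ped x + G x) :=
        intervalIntegral.integral_congr hcongrE
      rw [e1, intervalIntegral.integral_add (hPed_cont.intervalIntegrable _ _)
        (hG_cont.intervalIntegrable _ _)]
    have hGle : (∫ x in (0:ℝ)..L, G x) ≤ -(2*k) * Ee t := by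
      have hmono : (∫ x in (0:ℝ)..L, G x) ≤ ∫ x in (0:ℝ)..L, (-(2*k)) * ‖mX t x‖^2 := by
        apply intervalIntegral.integral_mono_on hL.le (hG_cont.intervalIntegrable _ _)
          ((continuous_const.mul (cmX.norm.pow 2)).intervalIntegrable _ _)
        intro x hxm
        have hcs := real_inner_mul_inner_self_le (m t x) (q t x)
        simp only [hGdef, Pi.mul_apply, Pi.pow_apply]
        nlinarith [mul_le_mul_of_nonneg_left hcs hν]
      calc (∫ x in (0:ℝ)..L, G x) ≤ ∫ x in (0:ℝ)..L, (-(2*k)) * ‖mX t x‖^2 := hmono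
        _ = -(2*k) * Ee t := by rw [intervalIntegral.integral_const_mul]
    rw [hEd_eq, hFTCe, zero_add]
    exact hGle
  -- exponential helper
  have hexp : ∀ s : ℝ, HasDerivAt (fun τ => Real.exp (2*k*τ)) (Real.exp (2*k*s) * (2*k)) s := by
    intro s
    simpa using ((hasDerivAt_id s).const_mul (2*k)).exp
  -- decay of Ee
  have hφanti : AntitoneOn (fun τ => Ee τ * Real.exp (2*k*τ)) (Set.Ici 0) := by
    apply antitoneOn_of_deriv_nonpos (convex_Ici 0)
    · exact fun s _ => (((hEderiv s).mul (hexp s)).differentiableAt).continuousAt.continuousWithinAt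
    · intro s _
      exact (((hEderiv s).mul (hexp s)).differentiableAt).differentiableWithinAt
    · intro s hs
      rw [interior_Ici] at hs
      rw [(show HasDerivAt (fun τ => Ee τ * Real.exp (2*k*τ)) _ s from (hEderiv s).mul (hexp s)).deriv]
      have h1 := key_E s hs.le
      have h2 := mul_le_mul_of_nonneg_right h1 (Real.exp_pos (2*k*s)).le
      nlinarith [Real.exp_pos (2*k*s)]
  have hEbound : ∀ s, 0 ≤ s → Ee s * Real.exp (2*k*s) ≤ Ee 0 := by
    intro s hs
    rcases eq_or_lt_of_le hs with h | h
    · rw [← h]; simp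
    · have := hφanti Set.self_mem_Ici (le_of_lt h) hs
      simpa using this
  set c2 : ℝ := 4*ν*Mb * Ee 0 with hc2def
  have hEe0 : 0 ≤ Ee 0 :=
    intervalIntegral.integral_nonneg hL.le (fun x _ => by positivity)
  have hc2 : 0 ≤ c2 := by
    rw [hc2def]
    have : (0:ℝ) ≤ 4*ν*Mb := by positivity
    exact mul_nonneg this hEe0
  -- decay of V
  have hlin : ∀ s : ℝ, HasDerivAt (fun τ : ℝ => c2 * τ) c2 s := by
    intro s
    simpa using (hasDerivAt_id s).const_mul c2
  have hψanti : AntitoneOn (fun τ => V τ * Real.exp (2*k*τ) - c2*τ) (Set.Ici 0) := by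
    apply antitoneOn_of_deriv_nonpos (convex_Ici 0)
    · intro s _
      exact ((((hVderiv s).mul (hexp s)).sub
        (hlin s)).differentiableAt).continuousAt.continuousWithinAt
    · intro s _
      exact ((((hVderiv s).mul (hexp s)).sub
        (hlin s)).differentiableAt).differentiableWithinAt
    · intro s hs
      rw [interior_Ici] at hs
      rw [(show HasDerivAt (fun τ => V τ * Real.exp (2*k*τ) - c2*τ) _ s from ((hVderiv s).mul (hexp s)).sub (hlin s)).deriv]
      have h1 := key_V s hs.le
      have h2 := mul_le_mul_of_nonneg_right h1 (Real.exp_pos (2*k*s)).le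
      have h3 := hEbound s hs.le
      have h4 : (0:ℝ) ≤ 4*ν*Mb := by positivity
      have h5 : 4*ν*Mb*(Ee s * Real.exp (2*k*s)) ≤ 4*ν*Mb*Ee 0 :=
        mul_le_mul_of_nonneg_left h3 h4
      rw [hc2def]
      nlinarith
  have hV0 : ∀ s, 0 ≤ V s :=
    fun s => intervalIntegral.integral_nonneg hL.le (fun x _ => by positivity)
  have hVub : ∀ s, 0 ≤ s → V s ≤ (V 0 + c2*s) * Real.exp (-(2*k*s)) := by
    intro s hs
    have h : V s * Real.exp (2*k*s) - c2*s ≤ V 0 * Real.exp (2*k*0) - c2*0 := by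
      rcases eq_or_lt_of_le hs with h | h
      · rw [← h]
      · exact hψanti Set.self_mem_Ici (le_of_lt h) hs
    have h0 : V 0 * Real.exp (2*k*0) - c2*0 = V 0 := by simp
    rw [h0] at h
    have hE := Real.exp_pos (2*k*s)
    calc V s = (V s * Real.exp (2*k*s)) * Real.exp (-(2*k*s)) := by
          rw [mul_assoc, ← Real.exp_add]; simp
      _ ≤ (V 0 + c2*s) * Real.exp (-(2*k*s)) :=
          mul_le_mul_of_nonneg_right (by linarith) (Real.exp_pos _).le
  -- the limit
  have h2k : Tendsto (fun s : ℝ => 2*k*s) atTop atTop :=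
    Tendsto.const_mul_atTop (by positivity) tendsto_id
  have hA : Tendsto (fun s : ℝ => V 0 * Real.exp (-(2*k*s))) atTop (nhds 0) := by
    have h := (Real.tendsto_pow_mul_exp_neg_atTop_nhds_zero 0).comp h2k
    simp only [Function.comp, pow_zero, one_mul] at h
    simpa using h.const_mul (V 0)
  have hB : Tendsto (fun s : ℝ => c2/(2*k) * ((2*k*s) * Real.exp (-(2*k*s)))) atTop (nhds 0) := by
    have h := (Real.tendsto_pow_mul_exp_neg_atTop_nhds_zero 1).comp h2k
    simp only [Function.comp, pow_one] at h
    simpa using h.const_mul (c2/(2*k))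
  have hlim : Tendsto (fun s : ℝ => (V 0 + c2*s) * Real.exp (-(2*k*s))) atTop (nhds 0) := by
    have heq : (fun s : ℝ => (V 0 + c2*s) * Real.exp (-(2*k*s)))
        = fun s : ℝ => V 0 * Real.exp (-(2*k*s))
          + c2/(2*k) * ((2*k*s) * Real.exp (-(2*k*s))) := by
      funext s
      have hk' : (2*k) ≠ 0 := by positivity
      field_simp
    rw [heq]
    simpa using hA.add hB
  apply squeeze_zero' (Eventually.of_forall hV0) ?_ hlim
  filter_upwards [eventually_ge_atTop (0:ℝ)] with s hs
  exact hVub s hs
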